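/- In any semiring R, the set C(R) of elements that are both complemented (there exists s with r+s = 1 and rs = 0) and commuting (rt = tr for all t) forms a Boolean algebra under the operations r ∨ s = r + r′s, r ∧ s = rs, complement r ↦ r′, 0, 1, where r′ is the (unique) complement of r. -/

import Mathlib

/-- An element of a semiring is in `C(R)` if it is complemented
(`∃ s, r + s = 1 ∧ r * s = 0`) and commuting (`∀ t, r * t = t * r`). -/
def InC {R : Type} [Semiring R] (r : R) : Prop :=
  (∃ s : R, r + s = 1 ∧ r * s = 0) ∧ (∀ t : R, r * t = t * r)

namespace InC

variable {R : Type} [Semiring R]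

theorem comm {r : R} (h : InC r) (t : R) : r * t = t * r := h.2 t

/-- The complement of `r`. -/
noncomputable def k {r : R} (h : InC r) : R := Classical.choose h.1

theorem add_k {r : R} (h : InC r) : r + h.k = 1 := (Classical.choose_spec h.1).1
theorem mul_k {r : R} (h : InC r) : r * h.k = 0 := (Classical.choose_spec h.1).2
theorem k_mul {r : R} (h : InC r) : h.k * r = 0 := by rw [← h.comm, h.mul_k]

theorem k_comm {r : R} (h : InC r) (t : R) : h.k * t = t * h.k := by
  have e1 : h.k * t = h.k * t * h.k := by
    conv_lhs => rw [← mul_one (h.k * t), ← h.add_k]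
    rw [mul_add, mul_assoc, ← h.comm t, ← mul_assoc, h.k_mul, zero_mul, zero_add]
  have e2 : t * h.k = h.k * t * h.k := by
    conv_lhs => rw [← one_mul t, ← h.add_k]
    rw [add_mul, add_mul, h.comm t, mul_assoc t r, h.mul_k, mul_zero, zero_add]
  exact e1.trans e2.symm

theorem idem {r : R} (h : InC r) : r * r = r := by
  conv_rhs => rw [← mul_one r, ← h.add_k]
  rw [mul_add, h.mul_k, add_zero]

theorem inC_k {r : R} (h : InC r) : InC h.k :=
  ⟨⟨r, by rw [add_comm, h.add_k], h.k_mul⟩, h.k_comm⟩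

theorem k_idem {r : R} (h : InC r) : h.k * h.k = h.k := h.inC_k.idem

/-- Complements are unique. -/
theorem k_eq {r s : R} (h : InC r) (h1 : r + s = 1) (h2 : r * s = 0) : h.k = s := by
  have hs : s * r = 0 := by rw [← h.comm, h2]
  have e1 : h.k = s * h.k := by
    conv_lhs => rw [← one_mul h.k, ← h1]
    rw [add_mul, h.mul_k, zero_add]
  have e2 : s = s * h.k := by
    conv_lhs => rw [← mul_one s, ← h.add_k]
    rw [mul_add, hs, zero_add]
  exact e1.trans e2.symm

theorem inC_zero : InC (0 : R) := ⟨⟨1, by simp, by simp⟩, by simp⟩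

theorem inC_one : InC (1 : R) := ⟨⟨0, by simp, by simp⟩, by simp⟩

theorem k_zero (h : InC (0 : R)) : h.k = 1 := h.k_eq (by simp) (by simp)

/- Facts about the product. -/

theorem mul_add_kmul {a b : R} (ha : InC a) (hb : InC b) :
    a * b + (ha.k + a * hb.k) = 1 := by
  rw [add_left_comm, ← mul_add, hb.add_k, mul_one, add_comm, ha.add_k]

theorem mul_mul_kmul {a b : R} (ha : InC a) (hb : InC b) :
    a * b * (ha.k + a * hb.k) = 0 := by
  rw [mul_add, mul_assoc a b ha.k, ← ha.k_comm b, ← mul_assoc a ha.k b, ha.mul_k,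
    zero_mul, zero_add, mul_assoc a b (a * hb.k), ← mul_assoc b a hb.k, ← ha.comm b,
    mul_assoc a b hb.k, hb.mul_k, mul_zero, mul_zero]

theorem inC_mul {a b : R} (ha : InC a) (hb : InC b) : InC (a * b) :=
  ⟨⟨ha.k + a * hb.k, ha.mul_add_kmul hb, ha.mul_mul_kmul hb⟩,
    fun t => by rw [mul_assoc, hb.comm, ← mul_assoc, ha.comm, mul_assoc]⟩

theorem k_of_mul {a b : R} (ha : InC a) (hb : InC b) (h : InC (a * b)) :
    h.k = ha.k + a * hb.k := h.k_eq (ha.mul_add_kmul hb) (ha.mul_mul_kmul hb)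

/- Facts about the join `a + aᶜ * b`. -/

theorem sup_add_ksup {a b : R} (ha : InC a) (hb : InC b) :
    (a + ha.k * b) + ha.k * hb.k = 1 := by
  rw [add_assoc, ← mul_add, hb.add_k, mul_one, ha.add_k]

theorem sup_mul_ksup {a b : R} (ha : InC a) (hb : InC b) :
    (a + ha.k * b) * (ha.k * hb.k) = 0 := by
  rw [add_mul, ← mul_assoc, ha.mul_k, zero_mul, zero_add, mul_assoc, ← mul_assoc b,
    ← ha.k_comm b, ← mul_assoc, ← mul_assoc, ha.inC_k.idem, mul_assoc, hb.mul_k,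
    mul_zero]

theorem inC_sup {a b : R} (ha : InC a) (hb : InC b) : InC (a + ha.k * b) :=
  ⟨⟨ha.k * hb.k, ha.sup_add_ksup hb, ha.sup_mul_ksup hb⟩,
    fun t => by rw [add_mul, mul_add, ha.comm, mul_assoc, hb.comm, ← mul_assoc,
      ha.k_comm, mul_assoc]⟩

theorem k_of_sup {a b : R} (ha : InC a) (hb : InC b) (h : InC (a + ha.k * b)) :
    h.k = ha.k * hb.k := h.k_eq (ha.sup_add_ksup hb) (ha.sup_mul_ksup hb)

/- The lattice equalities. -/

theorem sup_comm' {a b : R} (ha : InC a) (hb : InC b) :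
    a + ha.k * b = b + hb.k * a := by
  have ha' : a * b + a * hb.k = a := by rw [← mul_add, hb.add_k, mul_one]
  have hb' : b * a + b * ha.k = b := by rw [← mul_add, ha.add_k, mul_one]
  calc a + ha.k * b = (a * b + a * hb.k) + ha.k * b :=
        congrArg (· + ha.k * b) ha'.symm
    _ = (b * a + b * ha.k) + hb.k * a := by
        rw [ha.comm b, ← hb.k_comm a, ← ha.k_comm b, add_right_comm]
    _ = b + hb.k * a := congrArg (· + hb.k * a) hb' 

theorem sup_assoc' {a b c : R} (ha : InC a) (hb : InC b) (_hc : InC c) :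
    (a + ha.k * b) + (ha.k * hb.k) * c = a + ha.k * (b + hb.k * c) := by
  rw [add_assoc, mul_add, ← mul_assoc]

theorem sup_inf_self' {a b : R} (ha : InC a) :
    a + ha.k * (a * b) = a := by
  rw [← mul_assoc, ha.k_mul, zero_mul, add_zero]

theorem inf_sup_self' {a b : R} (ha : InC a) :
    a * (a + ha.k * b) = a := by
  rw [mul_add, ha.idem, ← mul_assoc, ha.mul_k, zero_mul, add_zero]

theorem inf_sup_distrib {a b c : R} (ha : InC a) (hb : InC b) (_hc : InC c) :
    a * (b + hb.k * c) = a * b + (ha.k + a * hb.k) * (a * c) := by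
  rw [mul_add, add_mul, ← mul_assoc ha.k a c, ha.k_mul, zero_mul, zero_add,
    mul_assoc a hb.k (a * c), ← mul_assoc hb.k a c, hb.k_comm a, mul_assoc a hb.k c,
    ← mul_assoc a a (hb.k * c), ha.idem]

end InC

/-- In any semiring `R`, the set `C(R)` of complemented commuting elements forms a
Boolean algebra in which meet is multiplication, complement is the (unique) semiring
complement, join is `r ∨ s = r + r′s`, bottom is `0` and top is `1`. -/
theorem complemented_commuting_boolean_algebra {R : Type} [Semiring R] :
    ∃ B : BooleanAlgebra {r : R // InC r},
      (∀ a b : {r : R // InC r}, (B.inf a b).1 = a.1 * b.1) ∧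
      (∀ a b : {r : R // InC r}, (B.sup a b).1 = a.1 + (B.compl a).1 * b.1) ∧
      (∀ a : {r : R // InC r}, a.1 + (B.compl a).1 = 1 ∧ a.1 * (B.compl a).1 = 0) ∧
      (B.bot.1 = (0 : R)) ∧ (B.top.1 = (1 : R)) := by
  classical
  open InC in
  letI S := {r : R // InC r}
  letI : Max S := ⟨fun a b => ⟨a.1 + a.2.k * b.1, inC_sup a.2 b.2⟩⟩
  letI : Min S := ⟨fun a b => ⟨a.1 * b.1, inC_mul a.2 b.2⟩⟩
  letI L : Lattice S := Lattice.mk'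
    (fun a b => Subtype.ext (sup_comm' a.2 b.2))
    (fun a b c => Subtype.ext (show
        (a.1 + a.2.k * b.1) + (inC_sup a.2 b.2).k * c.1
          = a.1 + a.2.k * (b.1 + b.2.k * c.1) from by
      rw [k_of_sup a.2 b.2 (inC_sup a.2 b.2)]
      exact sup_assoc' a.2 b.2 c.2))
    (fun a b => Subtype.ext (a.2.comm b.1))
    (fun a b c => Subtype.ext (mul_assoc a.1 b.1 c.1))
    (fun a b => Subtype.ext (sup_inf_self' a.2))
    (fun a b => Subtype.ext (inf_sup_self' a.2))
  letI D : DistribLattice S := DistribLattice.ofInfSupLe (fun a b c =>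
    le_of_eq (Subtype.ext (show
        a.1 * (b.1 + b.2.k * c.1)
          = a.1 * b.1 + (inC_mul a.2 b.2).k * (a.1 * c.1) from by
      rw [k_of_mul a.2 b.2 (inC_mul a.2 b.2)]
      exact inf_sup_distrib a.2 b.2 c.2)))
  letI : Bot S := ⟨⟨0, inC_zero⟩⟩
  letI : Top S := ⟨⟨1, inC_one⟩⟩
  letI : HasCompl S := ⟨fun a => ⟨a.2.k, inC_k a.2⟩⟩
  letI B : BooleanAlgebra S :=
    { D with
      compl := fun a => ⟨a.2.k, inC_k a.2⟩
      inf_compl_le_bot := fun a => le_of_eq (Subtype.ext (a.2.mul_k))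
      top_le_sup_compl := fun a => le_of_eq (Subtype.ext (show
          (1 : R) = a.1 + a.2.k * a.2.k from by
        rw [a.2.k_idem]
        exact a.2.add_k.symm))
      le_top := fun a => (le_sup_left : a ≤ a ⊔ ⊤).trans (le_of_eq (Subtype.ext (show
          a.1 + a.2.k * (1 : R) = 1 from by rw [mul_one, a.2.add_k])))
      bot_le := fun a => le_sup_left.trans_eq (Subtype.ext (show
          (0 : R) + (inC_zero).k * a.1 = a.1 from by
        rw [k_zero, one_mul, zero_add])) }
  refine ⟨B, fun a b => rfl, fun a b => rfl, fun a => ⟨a.2.add_k, a.2.mul_k⟩, rfl, rfl⟩
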